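/- arXiv:2109.10018 — 2 statements merged into one kernel-verified Lean document; each statement's English description precedes it below -/
import Mathlib

section
/- The epistemic regularity rule (JRE) — from φ ↔ ψ infer [t]_i φ ↔ [t]_i ψ — is not validity preserving in JTO_CS over interpreted-neighborhood systems: for every constant specification CS there exist formulas φ, ψ, an epistemic term t ∈ Tm^E and an agent i such that ⊨^N_CS φ ↔ ψ but not ⊨^N_CS [t]_i φ ↔ [t]_i ψ. In particular, for a justification variable x and an atomic proposition p, ⊨^N_CS p ↔ p∧p but not ⊨^N_CS [x]_i p ↔ [x]_i (p∧p). -/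
namespace JTO

/-- Epistemic justification terms. -/
inductive TmE (Const Var : Type) : Type
  | const : Const → TmE Const Var
  | var   : Var → TmE Const Var
  | bang  : TmE Const Var → TmE Const Var
  | plus  : TmE Const Var → TmE Const Var → TmE Const Var
  | times : TmE Const Var → TmE Const Var → TmE Const Var

/-- Deontic (normative) justification terms. -/
inductive TmO (Const Var : Type) : Type
  | const : Const → TmO Const Var
  | var   : Var → TmO Const Var
  | ddag  : TmO Const Var → TmO Const Var
  | times : TmO Const Var → TmO Const Var → TmO Const Var

/-- Formulas of the logic JTO. -/
inductive Fm (Ag Const Var Atom : Type) : Type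
  | atom  : Atom → Fm Ag Const Var Atom
  | bot   : Fm Ag Const Var Atom
  | imp   : Fm Ag Const Var Atom → Fm Ag Const Var Atom → Fm Ag Const Var Atom
  | next  : Fm Ag Const Var Atom → Fm Ag Const Var Atom
  | wprev : Fm Ag Const Var Atom → Fm Ag Const Var Atom
  | untl  : Fm Ag Const Var Atom → Fm Ag Const Var Atom → Fm Ag Const Var Atom
  | snce  : Fm Ag Const Var Atom → Fm Ag Const Var Atom → Fm Ag Const Var Atom
  | jbox  : Ag → TmE Const Var → Fm Ag Const Var Atom → Fm Ag Const Var Atom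
  | obox  : Ag → TmO Const Var → Fm Ag Const Var Atom → Fm Ag Const Var Atom

namespace Fm

variable {Ag Const Var Atom : Type}

/-- ¬φ := φ → ⊥ -/
def neg (φ : Fm Ag Const Var Atom) : Fm Ag Const Var Atom := φ.imp bot
/-- ⊤ := ¬⊥ -/
def top : Fm Ag Const Var Atom := neg bot
/-- φ ∨ ψ := ¬φ → ψ -/
def disj (φ ψ : Fm Ag Const Var Atom) : Fm Ag Const Var Atom := (neg φ).imp ψ
/-- φ ∧ ψ := ¬(¬φ ∨ ¬ψ) -/
def conj (φ ψ : Fm Ag Const Var Atom) : Fm Ag Const Var Atom := neg (disj (neg φ) (neg ψ))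
/-- φ ↔ ψ := (φ→ψ) ∧ (ψ→φ) -/
def biim (φ ψ : Fm Ag Const Var Atom) : Fm Ag Const Var Atom := conj (φ.imp ψ) (ψ.imp φ)
/-- strong previous ⊙ₛφ := ¬⊙_w¬φ -/
def sprev (φ : Fm Ag Const Var Atom) : Fm Ag Const Var Atom := neg (wprev (neg φ))
/-- eventually ◇φ := ⊤ U φ -/
def ev (φ : Fm Ag Const Var Atom) : Fm Ag Const Var Atom := untl top φ
/-- always (henceforth) □φ := ¬◇¬φ -/
def alw (φ : Fm Ag Const Var Atom) : Fm Ag Const Var Atom := neg (ev (neg φ))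
/-- once ◇⁻φ := ⊤ S φ -/
def once (φ : Fm Ag Const Var Atom) : Fm Ag Const Var Atom := snce top φ
/-- has-always-been □⁻φ := ¬◇⁻¬φ -/
def sofar (φ : Fm Ag Const Var Atom) : Fm Ag Const Var Atom := neg (once (neg φ))
/-- ⊡φ := □⁻φ ∧ □φ -/
def boxdot (φ : Fm Ag Const Var Atom) : Fm Ag Const Var Atom := conj (sofar φ) (alw φ)
/-- weak until (unless) φ W ψ := (φ U ψ) ∨ □φ -/
def wuntl (φ ψ : Fm Ag Const Var Atom) : Fm Ag Const Var Atom := disj (untl φ ψ) (alw φ)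
/-- permission P[s]ᵢφ := ¬O[s]ᵢ¬φ -/
def pbox (i : Ag) (t : TmO Const Var) (φ : Fm Ag Const Var Atom) : Fm Ag Const Var Atom :=
  neg (obox i t (neg φ))
/-- time = m, i.e. ⊙ₛ^m ⊙_w ⊥ -/
def timeEq : ℕ → Fm Ag Const Var Atom
  | 0 => wprev bot
  | m + 1 => sprev (timeEq m)
/-- true_m(φ) := ⊡(time=m → φ) -/
def trueAt (m : ℕ) (φ : Fm Ag Const Var Atom) : Fm Ag Const Var Atom :=
  boxdot ((timeEq m).imp φ)

/-- Subformulas. -/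
def subf : Fm Ag Const Var Atom → Set (Fm Ag Const Var Atom)
  | atom p => {atom p}
  | bot => {bot}
  | imp φ ψ => insert (imp φ ψ) (subf φ ∪ subf ψ)
  | next φ => insert (next φ) (subf φ)
  | wprev φ => insert (wprev φ) (subf φ)
  | untl φ ψ => insert (untl φ ψ) (subf φ ∪ subf ψ)
  | snce φ ψ => insert (snce φ ψ) (subf φ ∪ subf ψ)
  | jbox i t φ => insert (jbox i t φ) (subf φ)
  | obox i t φ => insert (obox i t φ) (subf φ)

/-- Subf⁺(χ) := A_χ ∪ {¬ψ : ψ ∈ A_χ}, with A_χ = Subf(χ) ∪ Subf(⊤ S ⊙_w⊥). -/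
def subfPlus (χ : Fm Ag Const Var Atom) : Set (Fm Ag Const Var Atom) :=
  (subf χ ∪ subf (snce top (wprev bot))) ∪ neg '' (subf χ ∪ subf (snce top (wprev bot)))

end Fm

variable {Ag Const Var Atom : Type}

/-- Propositional tautologies in the language of JTO. -/
def Taut (φ : Fm Ag Const Var Atom) : Prop :=
  ∀ v : Fm Ag Const Var Atom → Bool,
    v Fm.bot = false → (∀ a b, v (a.imp b) = (!(v a) || v b)) → v φ = true

/-- The axioms of JTO. -/
inductive IsAxiom : Fm Ag Const Var Atom → Prop
  | taut {φ : Fm Ag Const Var Atom} : Taut φ → IsAxiom φ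
  | nextK (φ ψ : Fm Ag Const Var Atom) :
      IsAxiom ((Fm.next (φ.imp ψ)).imp ((Fm.next φ).imp (Fm.next ψ)))
  | alwK (φ ψ : Fm Ag Const Var Atom) :
      IsAxiom ((Fm.alw (φ.imp ψ)).imp ((Fm.alw φ).imp (Fm.alw ψ)))
  | fn (φ : Fm Ag Const Var Atom) :
      IsAxiom (Fm.biim (Fm.next (Fm.neg φ)) (Fm.neg (Fm.next φ)))
  | ind (φ : Fm Ag Const Var Atom) :
      IsAxiom ((Fm.alw (φ.imp (Fm.next φ))).imp (φ.imp (Fm.alw φ)))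
  | untl1 (φ ψ : Fm Ag Const Var Atom) :
      IsAxiom ((Fm.untl φ ψ).imp (Fm.ev ψ))
  | untl2 (φ ψ : Fm Ag Const Var Atom) :
      IsAxiom (Fm.biim (Fm.untl φ ψ) (Fm.disj ψ (Fm.conj φ (Fm.next (Fm.untl φ ψ)))))
  | sofarK (φ ψ : Fm Ag Const Var Atom) :
      IsAxiom ((Fm.sofar (φ.imp ψ)).imp ((Fm.sofar φ).imp (Fm.sofar ψ)))
  | wprevK (φ ψ : Fm Ag Const Var Atom) :
      IsAxiom ((Fm.wprev (φ.imp ψ)).imp ((Fm.wprev φ).imp (Fm.wprev ψ)))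
  | sw (φ : Fm Ag Const Var Atom) : IsAxiom ((Fm.sprev φ).imp (Fm.wprev φ))
  | initial : IsAxiom (Fm.once (Fm.wprev (Fm.bot : Fm Ag Const Var Atom)))
  | sofarInd (φ : Fm Ag Const Var Atom) :
      IsAxiom ((Fm.sofar (φ.imp (Fm.wprev φ))).imp (φ.imp (Fm.sofar φ)))
  | snce1 (φ ψ : Fm Ag Const Var Atom) : IsAxiom ((Fm.snce φ ψ).imp (Fm.once ψ))
  | snce2 (φ ψ : Fm Ag Const Var Atom) :
      IsAxiom (Fm.biim (Fm.snce φ ψ) (Fm.disj ψ (Fm.conj φ (Fm.sprev (Fm.snce φ ψ)))))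
  | fp (φ : Fm Ag Const Var Atom) : IsAxiom (φ.imp (Fm.next (Fm.sprev φ)))
  | pf (φ : Fm Ag Const Var Atom) : IsAxiom (φ.imp (Fm.wprev (Fm.next φ)))
  | app (i : Ag) (t s : TmE Const Var) (φ ψ : Fm Ag Const Var Atom) :
      IsAxiom ((Fm.jbox i t (φ.imp ψ)).imp ((Fm.jbox i s φ).imp (Fm.jbox i (TmE.times t s) ψ)))
  | sum1 (i : Ag) (t s : TmE Const Var) (φ : Fm Ag Const Var Atom) :
      IsAxiom ((Fm.jbox i t φ).imp (Fm.jbox i (TmE.plus t s) φ))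
  | sum2 (i : Ag) (t s : TmE Const Var) (φ : Fm Ag Const Var Atom) :
      IsAxiom ((Fm.jbox i s φ).imp (Fm.jbox i (TmE.plus t s) φ))
  | fact (i : Ag) (t : TmE Const Var) (φ : Fm Ag Const Var Atom) :
      IsAxiom ((Fm.jbox i t φ).imp φ)
  | pos (i : Ag) (t : TmE Const Var) (φ : Fm Ag Const Var Atom) :
      IsAxiom ((Fm.jbox i t φ).imp (Fm.jbox i (TmE.bang t) (Fm.jbox i t φ)))
  | appO (i : Ag) (t s : TmO Const Var) (φ ψ : Fm Ag Const Var Atom) :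
      IsAxiom ((Fm.obox i t (φ.imp ψ)).imp ((Fm.obox i s φ).imp (Fm.obox i (TmO.times t s) ψ)))
  | noc (i : Ag) (t : TmO Const Var) (φ : Fm Ag Const Var Atom) :
      IsAxiom ((Fm.obox i t φ).imp (Fm.pbox i t φ))
  | ofact (i : Ag) (t : TmO Const Var) (φ : Fm Ag Const Var Atom) :
      IsAxiom (Fm.obox i (TmO.ddag t) ((Fm.obox i t φ).imp φ))

/-- Formulas of the shape [c_{j_n}]_{i_n} … [c_{j_1}]_{i_1} φ with φ an axiom instance, n ≥ 1. -/
inductive EIter : Fm Ag Const Var Atom → Prop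
  | base {i : Ag} {c : Const} {φ : Fm Ag Const Var Atom} :
      IsAxiom φ → EIter (Fm.jbox i (TmE.const c) φ)
  | step {i : Ag} {c : Const} {φ : Fm Ag Const Var Atom} :
      EIter φ → EIter (Fm.jbox i (TmE.const c) φ)

/-- Formulas of the shape O[c_{j_n}]_{i_n} … O[c_{j_1}]_{i_1} φ with φ an axiom instance, n ≥ 1. -/
inductive OIter : Fm Ag Const Var Atom → Prop
  | base {i : Ag} {c : Const} {φ : Fm Ag Const Var Atom} :
      IsAxiom φ → OIter (Fm.obox i (TmO.const c) φ)
  | step {i : Ag} {c : Const} {φ : Fm Ag Const Var Atom} :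
      OIter φ → OIter (Fm.obox i (TmO.const c) φ)

/-- A constant specification: a downward closed set of iterated constant-justification
assertions of axiom instances. -/
structure ConstSpec (Ag Const Var Atom : Type) where
  set : Set (Fm Ag Const Var Atom)
  shape : ∀ φ ∈ set, EIter φ ∨ OIter φ
  dcE : ∀ (i : Ag) (c : Const) (φ : Fm Ag Const Var Atom),
    Fm.jbox i (TmE.const c) φ ∈ set → EIter φ → φ ∈ set
  dcO : ∀ (i : Ag) (c : Const) (φ : Fm Ag Const Var Atom),
    Fm.obox i (TmO.const c) φ ∈ set → OIter φ → φ ∈ set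

/-- CS^E : the epistemic part of a constant specification. -/
def ConstSpec.csE (CS : ConstSpec Ag Const Var Atom) : Set (Fm Ag Const Var Atom) :=
  {φ ∈ CS.set | EIter φ}

/-- CS^O : the deontic part of a constant specification. -/
def ConstSpec.csO (CS : ConstSpec Ag Const Var Atom) : Set (Fm Ag Const Var Atom) :=
  {φ ∈ CS.set | OIter φ}

/-- Derivability in the Hilbert system JTO_CS. -/
inductive Deriv (CS : ConstSpec Ag Const Var Atom) : Fm Ag Const Var Atom → Prop
  | ax {φ : Fm Ag Const Var Atom} : IsAxiom φ → Deriv CS φ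
  | mp {φ ψ : Fm Ag Const Var Atom} : Deriv CS (φ.imp ψ) → Deriv CS φ → Deriv CS ψ
  | necNext {φ : Fm Ag Const Var Atom} : Deriv CS φ → Deriv CS (Fm.next φ)
  | necWPrev {φ : Fm Ag Const Var Atom} : Deriv CS φ → Deriv CS (Fm.wprev φ)
  | necAlw {φ : Fm Ag Const Var Atom} : Deriv CS φ → Deriv CS (Fm.alw φ)
  | necSofar {φ : Fm Ag Const Var Atom} : Deriv CS φ → Deriv CS (Fm.sofar φ)
  | csax {φ : Fm Ag Const Var Atom} : φ ∈ CS.set → Deriv CS φ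

/-- Conjunction of a list of formulas. -/
def conjList : List (Fm Ag Const Var Atom) → Fm Ag Const Var Atom
  | [] => Fm.top
  | φ :: l => Fm.conj φ (conjList l)

/-- T ⊢_CS φ iff ⊢_CS (ψ₁ ∧ … ∧ ψ_n) → φ for some ψ₁, …, ψ_n ∈ T. -/
def DerivFrom (CS : ConstSpec Ag Const Var Atom) (T : Set (Fm Ag Const Var Atom))
    (φ : Fm Ag Const Var Atom) : Prop :=
  ∃ L : List (Fm Ag Const Var Atom), (∀ ψ ∈ L, ψ ∈ T) ∧ Deriv CS ((conjList L).imp φ)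

/-- A set of formulas is consistent if it does not derive ⊥. -/
def Consistent (CS : ConstSpec Ag Const Var Atom) (T : Set (Fm Ag Const Var Atom)) : Prop :=
  ¬ DerivFrom CS T Fm.bot

end JTO
namespace JTO

variable {Ag Const Var Atom : Type}

/-- The data of an F-interpreted system (Fitting-style), without conditions. -/
structure FQuasi (Ag Const Var Atom S : Type) where
  R : Set (ℕ → S)
  K : Ag → S → S → Prop
  KO : Ag → S → S → Prop
  E : Ag → S → TmE Const Var → Set (Fm Ag Const Var Atom)
  EO : Ag → S → TmO Const Var → Set (Fm Ag Const Var Atom)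
  val : S → Set Atom

/-- Truth at a point (r, n) of an F-interpreted system. -/
def FQuasi.Sat {S : Type} (I : FQuasi Ag Const Var Atom S) :
    Fm Ag Const Var Atom → (ℕ → S) → ℕ → Prop
  | .atom p, r, n => p ∈ I.val (r n)
  | .bot, _, _ => False
  | .imp φ ψ, r, n => I.Sat φ r n → I.Sat ψ r n
  | .next φ, r, n => I.Sat φ r (n + 1)
  | .wprev φ, r, n => n = 0 ∨ I.Sat φ r (n - 1)
  | .untl φ ψ, r, n => ∃ m, n ≤ m ∧ I.Sat ψ r m ∧ ∀ k, n ≤ k → k < m → I.Sat φ r k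
  | .snce φ ψ, r, n => ∃ m, m ≤ n ∧ I.Sat ψ r m ∧ ∀ k, m < k → k ≤ n → I.Sat φ r k
  | .jbox i t φ, r, n =>
      φ ∈ I.E i (r n) t ∧ ∀ r' ∈ I.R, ∀ n' : ℕ, I.K i (r n) (r' n') → I.Sat φ r' n'
  | .obox i t φ, r, n =>
      φ ∈ I.EO i (r n) t ∧ ∀ r' ∈ I.R, ∀ n' : ℕ, I.KO i (r n) (r' n') → I.Sat φ r' n'

/-- An F-interpreted system for JTO_CS. -/
structure FIS (Ag Const Var Atom S : Type) (CS : ConstSpec Ag Const Var Atom)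
    extends FQuasi Ag Const Var Atom S where
  Sne : Nonempty S
  Rne : R.Nonempty
  Krefl : ∀ (i : Ag) (w : S), K i w w
  Ktrans : ∀ (i : Ag) (u v w : S), K i u v → K i v w → K i u w
  KOshift : ∀ (i : Ag) (w v : S), KO i w v → KO i v v
  Emono : ∀ (i : Ag) (v w : S) (t : TmE Const Var), K i v w → E i v t ⊆ E i w t
  Ecs : ∀ (i : Ag) (w : S) (t : TmE Const Var) (φ : Fm Ag Const Var Atom),
    Fm.jbox i t φ ∈ CS.csE → φ ∈ E i w t
  Eapp : ∀ (i : Ag) (w : S) (t s : TmE Const Var) (φ ψ : Fm Ag Const Var Atom),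
    φ.imp ψ ∈ E i w t → φ ∈ E i w s → ψ ∈ E i w (TmE.times t s)
  Epos : ∀ (i : Ag) (w : S) (t : TmE Const Var) (φ : Fm Ag Const Var Atom),
    φ ∈ E i w t → Fm.jbox i t φ ∈ E i w (TmE.bang t)
  EOcs : ∀ (i : Ag) (w : S) (t : TmO Const Var) (φ : Fm Ag Const Var Atom),
    Fm.obox i t φ ∈ CS.csO → φ ∈ EO i w t
  EOapp : ∀ (i : Ag) (w : S) (t s : TmO Const Var) (φ ψ : Fm Ag Const Var Atom),
    φ.imp ψ ∈ EO i w t → φ ∈ EO i w s → ψ ∈ EO i w (TmO.times t s)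
  EOcons : ∀ (i : Ag) (w : S) (t : TmO Const Var) (φ : Fm Ag Const Var Atom),
    φ ∈ EO i w t → Fm.neg φ ∉ EO i w t
  EOfact : ∀ (i : Ag) (w : S) (t : TmO Const Var) (φ : Fm Ag Const Var Atom),
    (Fm.obox i t φ).imp φ ∈ EO i w (TmO.ddag t)

/-- Truth at a point of an F-interpreted system. -/
abbrev FIS.Sat {S : Type} {CS : ConstSpec Ag Const Var Atom}
    (I : FIS Ag Const Var Atom S CS) :
    Fm Ag Const Var Atom → (ℕ → S) → ℕ → Prop :=
  I.toFQuasi.Sat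

/-- I ⊨ φ : truth at every point of the system. -/
def FIS.Valid {S : Type} {CS : ConstSpec Ag Const Var Atom}
    (I : FIS Ag Const Var Atom S CS) (φ : Fm Ag Const Var Atom) : Prop :=
  ∀ r ∈ I.R, ∀ n : ℕ, I.Sat φ r n

/-- ⊨_CS φ : validity in all F-interpreted systems for JTO_CS. -/
def FValid (CS : ConstSpec Ag Const Var Atom) (φ : Fm Ag Const Var Atom) : Prop :=
  ∀ (S : Type) (I : FIS Ag Const Var Atom S CS), I.Valid φ

/-- T ⊨_CS φ : the local consequence relation over F-interpreted systems. -/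
def FConseq (CS : ConstSpec Ag Const Var Atom) (T : Set (Fm Ag Const Var Atom))
    (φ : Fm Ag Const Var Atom) : Prop :=
  ∀ (S : Type) (I : FIS Ag Const Var Atom S CS), ∀ r ∈ I.R, ∀ n : ℕ,
    (∀ ψ ∈ T, I.Sat ψ r n) → I.Sat φ r n

/-- Maximal consistent sets of formulas. -/
def MCS (CS : ConstSpec Ag Const Var Atom) : Set (Set (Fm Ag Const Var Atom)) :=
  {Γ | Consistent CS Γ ∧ ∀ Δ, Γ ⊂ Δ → ¬ Consistent CS Δ}

/-- χ-maximal consistent subsets of Subf⁺(χ). -/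
def MCSx (CS : ConstSpec Ag Const Var Atom) (χ : Fm Ag Const Var Atom) :
    Set (Set (Fm Ag Const Var Atom)) :=
  {X | X ⊆ Fm.subfPlus χ ∧ Consistent CS X ∧
    ∀ Y, Y ⊆ Fm.subfPlus χ → X ⊂ Y → ¬ Consistent CS Y}

/-- The relation R_○ on MCS_χ (given by witnessing maximal consistent sets). -/
def Rnext (CS : ConstSpec Ag Const Var Atom) (χ : Fm Ag Const Var Atom)
    (X Y : Set (Fm Ag Const Var Atom)) : Prop :=
  ∃ Γ ∈ MCS CS, ∃ Δ ∈ MCS CS, X = Γ ∩ Fm.subfPlus χ ∧ Y = Δ ∩ Fm.subfPlus χ ∧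
    {φ | Fm.next φ ∈ Γ} ⊆ Δ

/-- Acceptable sequences of elements of MCS_χ. -/
def Acceptable (CS : ConstSpec Ag Const Var Atom) (χ : Fm Ag Const Var Atom)
    (X : ℕ → Set (Fm Ag Const Var Atom)) : Prop :=
  (∀ n, X n ∈ MCSx CS χ) ∧
  (∀ n, Rnext CS χ (X n) (X (n + 1))) ∧
  (∀ n (φ ψ : Fm Ag Const Var Atom), Fm.untl φ ψ ∈ X n →
    ∃ m, n ≤ m ∧ ψ ∈ X m ∧ ∀ k, n ≤ k → k < m → φ ∈ X k) ∧
  Fm.wprev Fm.bot ∈ X 0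

/-- The canonical epistemic accessibility relation. -/
def canK (CS : ConstSpec Ag Const Var Atom) (χ : Fm Ag Const Var Atom) (i : Ag)
    (X Y : Set (Fm Ag Const Var Atom)) : Prop :=
  ∀ Δ ∈ MCS CS, Y = Δ ∩ Fm.subfPlus χ →
    ∃ Γ ∈ MCS CS, X = Γ ∩ Fm.subfPlus χ ∧
      {φ | ∃ t : TmE Const Var, Fm.jbox i t φ ∈ Γ} ⊆ Δ

/-- The canonical evidence function. -/
def canE (CS : ConstSpec Ag Const Var Atom) (χ : Fm Ag Const Var Atom) (i : Ag)
    (X : Set (Fm Ag Const Var Atom)) (t : TmE Const Var) : Set (Fm Ag Const Var Atom) :=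
  {φ | ∀ Γ ∈ MCS CS, X = Γ ∩ Fm.subfPlus χ → Fm.jbox i t φ ∈ Γ}

/-- The canonical deontic accessibility relation. -/
def canKO (CS : ConstSpec Ag Const Var Atom) (χ : Fm Ag Const Var Atom) (i : Ag)
    (X Y : Set (Fm Ag Const Var Atom)) : Prop :=
  ∃ Γ ∈ MCS CS, ∃ Δ ∈ MCS CS, X = Γ ∩ Fm.subfPlus χ ∧ Y = Δ ∩ Fm.subfPlus χ ∧
    {φ | ∃ t : TmO Const Var, Fm.obox i t φ ∈ Γ} ⊆ Δ

/-- The canonical normative evidence function. -/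
def canEO (CS : ConstSpec Ag Const Var Atom) (χ : Fm Ag Const Var Atom) (i : Ag)
    (X : Set (Fm Ag Const Var Atom)) (t : TmO Const Var) : Set (Fm Ag Const Var Atom) :=
  {φ | ∀ Γ ∈ MCS CS, X = Γ ∩ Fm.subfPlus χ → Fm.obox i t φ ∈ Γ}

/-- The χ-canonical F-interpreted system (as structured data). -/
def canFQuasi (CS : ConstSpec Ag Const Var Atom) (χ : Fm Ag Const Var Atom) :
    FQuasi Ag Const Var Atom ↥(MCSx CS χ) where
  R := {r | Acceptable CS χ (fun n => ((r n : Set (Fm Ag Const Var Atom))))}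
  K := fun i X Y => canK CS χ i X.1 Y.1
  KO := fun i X Y => canKO CS χ i X.1 Y.1
  E := fun i X t => canE CS χ i X.1 t
  EO := fun i X t => canEO CS χ i X.1 t
  val := fun X => {p | Fm.atom p ∈ X.1}

end JTO
namespace JTO

variable {Ag Const Var Atom : Type}

/-- The data of a quasi-interpreted-neighborhood system. -/
structure NQuasi (Ag Const Var Atom S : Type) where
  R : Set (ℕ → S)
  N : Ag → S → TmE Const Var → Set (Set S)
  NO : Ag → S → TmO Const Var → Set (Set S)
  val : S → Set Atom
  valF : S → Set (Fm Ag Const Var Atom)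

/-- The image Im(R) of the system of runs. -/
def NQuasi.Im {S : Type} (I : NQuasi Ag Const Var Atom S) : Set S :=
  {w | ∃ r ∈ I.R, ∃ n : ℕ, r n = w}

/-- Truth at a point (r, n) of a quasi-interpreted-neighborhood system. -/
def NQuasi.SatP {S : Type} (I : NQuasi Ag Const Var Atom S) :
    Fm Ag Const Var Atom → (ℕ → S) → ℕ → Prop
  | .atom p, r, n => p ∈ I.val (r n)
  | .bot, _, _ => False
  | .imp φ ψ, r, n => I.SatP φ r n → I.SatP ψ r n
  | .next φ, r, n => I.SatP φ r (n + 1)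
  | .wprev φ, r, n => n = 0 ∨ I.SatP φ r (n - 1)
  | .untl φ ψ, r, n => ∃ m, n ≤ m ∧ I.SatP ψ r m ∧ ∀ k, n ≤ k → k < m → I.SatP φ r k
  | .snce φ ψ, r, n => ∃ m, m ≤ n ∧ I.SatP ψ r m ∧ ∀ k, m < k → k ≤ n → I.SatP φ r k
  | .jbox i t φ, r, n =>
      {w | (∃ r' ∈ I.R, ∃ n' : ℕ, r' n' = w ∧ I.SatP φ r' n') ∨
            (w ∉ I.Im ∧ φ ∈ I.valF w)} ∈ I.N i (r n) t
  | .obox i t φ, r, n =>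
      {w | (∃ r' ∈ I.R, ∃ n' : ℕ, r' n' = w ∧ I.SatP φ r' n') ∨
            (w ∉ I.Im ∧ φ ∈ I.valF w)} ∈ I.NO i (r n) t

/-- Truth at a state of a quasi-interpreted-neighborhood system. -/
def NQuasi.SatS {S : Type} (I : NQuasi Ag Const Var Atom S)
    (φ : Fm Ag Const Var Atom) (w : S) : Prop :=
  (∃ r ∈ I.R, ∃ n : ℕ, r n = w ∧ I.SatP φ r n) ∨ (w ∉ I.Im ∧ φ ∈ I.valF w)

/-- The truth set ⟦φ⟧ of a formula. -/
def NQuasi.tset {S : Type} (I : NQuasi Ag Const Var Atom S)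
    (φ : Fm Ag Const Var Atom) : Set S :=
  {w | I.SatS φ w}

/-- An interpreted-neighborhood system for JTO_CS. -/
structure NIS (Ag Const Var Atom S : Type) (CS : ConstSpec Ag Const Var Atom)
    extends NQuasi Ag Const Var Atom S where
  Sne : Nonempty S
  Rne : R.Nonempty
  Ncs : ∀ (i : Ag) (t : TmE Const Var) (φ : Fm Ag Const Var Atom),
    Fm.jbox i t φ ∈ CS.csE → ∀ w ∈ toNQuasi.Im, toNQuasi.tset φ ∈ N i w t
  Napp : ∀ (i : Ag), ∀ w ∈ toNQuasi.Im, ∀ (t s : TmE Const Var) (φ ψ : Fm Ag Const Var Atom),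
    toNQuasi.tset (φ.imp ψ) ∈ N i w t → toNQuasi.tset φ ∈ N i w s →
      toNQuasi.tset ψ ∈ N i w (TmE.times t s)
  Nsum : ∀ (i : Ag), ∀ w ∈ toNQuasi.Im, ∀ (t s : TmE Const Var) (φ : Fm Ag Const Var Atom),
    toNQuasi.tset φ ∈ N i w s →
      toNQuasi.tset φ ∈ N i w (TmE.plus t s) ∧ toNQuasi.tset φ ∈ N i w (TmE.plus s t)
  Nrefl : ∀ (i : Ag), ∀ w ∈ toNQuasi.Im, ∀ (t : TmE Const Var) (φ : Fm Ag Const Var Atom),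
    toNQuasi.tset φ ∈ N i w t → w ∈ toNQuasi.tset φ
  Npos : ∀ (i : Ag), ∀ w ∈ toNQuasi.Im, ∀ (t : TmE Const Var) (φ : Fm Ag Const Var Atom),
    toNQuasi.tset φ ∈ N i w t → toNQuasi.tset (Fm.jbox i t φ) ∈ N i w (TmE.bang t)
  NOcs : ∀ (i : Ag) (t : TmO Const Var) (φ : Fm Ag Const Var Atom),
    Fm.obox i t φ ∈ CS.csO → ∀ w ∈ toNQuasi.Im, toNQuasi.tset φ ∈ NO i w t
  NOapp : ∀ (i : Ag), ∀ w ∈ toNQuasi.Im, ∀ (t s : TmO Const Var) (φ ψ : Fm Ag Const Var Atom),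
    toNQuasi.tset (φ.imp ψ) ∈ NO i w t → toNQuasi.tset φ ∈ NO i w s →
      toNQuasi.tset ψ ∈ NO i w (TmO.times t s)
  NOnoc : ∀ (i : Ag), ∀ w ∈ toNQuasi.Im, ∀ (t : TmO Const Var) (φ : Fm Ag Const Var Atom),
    toNQuasi.tset φ ∈ NO i w t → toNQuasi.tset (Fm.neg φ) ∉ NO i w t
  NOfact : ∀ (i : Ag), ∀ w ∈ toNQuasi.Im, ∀ (t : TmO Const Var) (φ : Fm Ag Const Var Atom),
    toNQuasi.tset ((Fm.obox i t φ).imp φ) ∈ NO i w (TmO.ddag t)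

/-- Truth at a point of an interpreted-neighborhood system. -/
abbrev NIS.SatP {S : Type} {CS : ConstSpec Ag Const Var Atom}
    (I : NIS Ag Const Var Atom S CS) :
    Fm Ag Const Var Atom → (ℕ → S) → ℕ → Prop :=
  I.toNQuasi.SatP

/-- I ⊨ φ for an interpreted-neighborhood system. -/
def NIS.Valid {S : Type} {CS : ConstSpec Ag Const Var Atom}
    (I : NIS Ag Const Var Atom S CS) (φ : Fm Ag Const Var Atom) : Prop :=
  ∀ r ∈ I.R, ∀ n : ℕ, I.SatP φ r n

/-- ⊨^N_CS φ : validity in all interpreted-neighborhood systems for JTO_CS. -/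
def NValid (CS : ConstSpec Ag Const Var Atom) (φ : Fm Ag Const Var Atom) : Prop :=
  ∀ (S : Type) (I : NIS Ag Const Var Atom S CS), I.Valid φ

/-- T ⊨^N_CS φ : local consequence over interpreted-neighborhood systems. -/
def NConseq (CS : ConstSpec Ag Const Var Atom) (T : Set (Fm Ag Const Var Atom))
    (φ : Fm Ag Const Var Atom) : Prop :=
  ∀ (S : Type) (I : NIS Ag Const Var Atom S CS), ∀ r ∈ I.R, ∀ n : ℕ,
    (∀ ψ ∈ T, I.SatP ψ r n) → I.SatP φ r n

end JTO

namespace JTO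

section JRE

open Classical

variable {Ag Const Var Atom : Type}

namespace NQuasi

variable {S : Type} (I : NQuasi Ag Const Var Atom S)

lemma satP_bot (r : ℕ → S) (n : ℕ) : I.SatP (Fm.bot) r n ↔ False := Iff.rfl

lemma satP_imp (φ ψ : Fm Ag Const Var Atom) (r : ℕ → S) (n : ℕ) :
    I.SatP (φ.imp ψ) r n ↔ (I.SatP φ r n → I.SatP ψ r n) := Iff.rfl

lemma satP_neg (φ : Fm Ag Const Var Atom) (r : ℕ → S) (n : ℕ) :
    I.SatP (Fm.neg φ) r n ↔ ¬ I.SatP φ r n := Iff.rfl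

lemma satP_top (r : ℕ → S) (n : ℕ) : I.SatP (Fm.top) r n := fun h => h

lemma satP_conj (φ ψ : Fm Ag Const Var Atom) (r : ℕ → S) (n : ℕ) :
    I.SatP (Fm.conj φ ψ) r n ↔ (I.SatP φ r n ∧ I.SatP ψ r n) := by
  simp only [Fm.conj, Fm.disj, Fm.neg, satP_imp, satP_bot]; tauto

lemma satP_disj (φ ψ : Fm Ag Const Var Atom) (r : ℕ → S) (n : ℕ) :
    I.SatP (Fm.disj φ ψ) r n ↔ (I.SatP φ r n ∨ I.SatP ψ r n) := by
  simp only [Fm.disj, Fm.neg, satP_imp, satP_bot]; tauto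

lemma satP_biim (φ ψ : Fm Ag Const Var Atom) (r : ℕ → S) (n : ℕ) :
    I.SatP (Fm.biim φ ψ) r n ↔ (I.SatP φ r n ↔ I.SatP ψ r n) := by
  simp only [Fm.biim, satP_conj, satP_imp]; tauto

lemma satP_next (φ : Fm Ag Const Var Atom) (r : ℕ → S) (n : ℕ) :
    I.SatP (Fm.next φ) r n ↔ I.SatP φ r (n + 1) := Iff.rfl

lemma satP_wprev (φ : Fm Ag Const Var Atom) (r : ℕ → S) (n : ℕ) :
    I.SatP (Fm.wprev φ) r n ↔ (n = 0 ∨ I.SatP φ r (n - 1)) := Iff.rfl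

lemma satP_sprev (φ : Fm Ag Const Var Atom) (r : ℕ → S) (n : ℕ) :
    I.SatP (Fm.sprev φ) r n ↔ (n ≠ 0 ∧ I.SatP φ r (n - 1)) := by
  simp only [Fm.sprev, satP_neg, satP_wprev]; tauto

lemma satP_untl (φ ψ : Fm Ag Const Var Atom) (r : ℕ → S) (n : ℕ) :
    I.SatP (Fm.untl φ ψ) r n ↔
      ∃ m, n ≤ m ∧ I.SatP ψ r m ∧ ∀ k, n ≤ k → k < m → I.SatP φ r k := Iff.rfl

lemma satP_snce (φ ψ : Fm Ag Const Var Atom) (r : ℕ → S) (n : ℕ) :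
    I.SatP (Fm.snce φ ψ) r n ↔
      ∃ m, m ≤ n ∧ I.SatP ψ r m ∧ ∀ k, m < k → k ≤ n → I.SatP φ r k := Iff.rfl

lemma satP_ev (ψ : Fm Ag Const Var Atom) (r : ℕ → S) (n : ℕ) :
    I.SatP (Fm.ev ψ) r n ↔ ∃ m, n ≤ m ∧ I.SatP ψ r m := by
  rw [Fm.ev, satP_untl]
  constructor
  · rintro ⟨m, h1, h2, -⟩; exact ⟨m, h1, h2⟩
  · rintro ⟨m, h1, h2⟩; exact ⟨m, h1, h2, fun k _ _ => I.satP_top r k⟩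

lemma satP_alw (φ : Fm Ag Const Var Atom) (r : ℕ → S) (n : ℕ) :
    I.SatP (Fm.alw φ) r n ↔ ∀ m, n ≤ m → I.SatP φ r m := by
  rw [Fm.alw, satP_neg, satP_ev]
  push_neg
  constructor
  · intro h m hm; by_contra hc; exact h m hm hc
  · intro h m hm hc; exact hc (h m hm)

lemma satP_once (ψ : Fm Ag Const Var Atom) (r : ℕ → S) (n : ℕ) :
    I.SatP (Fm.once ψ) r n ↔ ∃ m, m ≤ n ∧ I.SatP ψ r m := by
  rw [Fm.once, satP_snce]
  constructor
  · rintro ⟨m, h1, h2, -⟩; exact ⟨m, h1, h2⟩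
  · rintro ⟨m, h1, h2⟩; exact ⟨m, h1, h2, fun k _ _ => I.satP_top r k⟩

lemma satP_sofar (φ : Fm Ag Const Var Atom) (r : ℕ → S) (n : ℕ) :
    I.SatP (Fm.sofar φ) r n ↔ ∀ m, m ≤ n → I.SatP φ r m := by
  rw [Fm.sofar, satP_neg, satP_once]
  push_neg
  constructor
  · intro h m hm; by_contra hc; exact h m hm hc
  · intro h m hm hc; exact hc (h m hm)

lemma satP_jbox (i : Ag) (t : TmE Const Var) (φ : Fm Ag Const Var Atom)
    (r : ℕ → S) (n : ℕ) :
    I.SatP (Fm.jbox i t φ) r n ↔ I.tset φ ∈ I.N i (r n) t := Iff.rfl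

lemma satP_obox (i : Ag) (t : TmO Const Var) (φ : Fm Ag Const Var Atom)
    (r : ℕ → S) (n : ℕ) :
    I.SatP (Fm.obox i t φ) r n ↔ I.tset φ ∈ I.NO i (r n) t := Iff.rfl

end NQuasi

end JRE

end JTO
namespace JTO

section JREModel

open Classical

variable {Ag Const Var Atom : Type}

/-- The two extra (non-run) states are `Sum.inr true` (theory state) and
`Sum.inr false` (the distinguishing state). -/
def cCore : Set (ℕ ⊕ Bool) := {w | w ≠ Sum.inr false}

/-- The underlying quasi-system of the countermodel. -/
def cQuasi (p : Atom) : NQuasi Ag Const Var Atom (ℕ ⊕ Bool) where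
  R := {Sum.inl}
  N := fun _ _ t =>
    match t with
    | TmE.var _ => {Set.univ}
    | _ => {A | cCore ⊆ A}
  NO := fun _ _ _ => {A | cCore ⊆ A}
  val := fun _ => Set.univ
  valF := fun w =>
    match w with
    | Sum.inr false => {Fm.atom p}
    | _ => Set.univ

variable (p : Atom)

lemma cIm : (cQuasi (Ag := Ag) (Const := Const) (Var := Var) p).Im = Set.range Sum.inl := by
  ext w
  constructor
  · rintro ⟨r', hr', n, rfl⟩
    rcases hr' with rfl
    exact ⟨n, rfl⟩
  · rintro ⟨n, rfl⟩
    exact ⟨Sum.inl, rfl, n, rfl⟩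

lemma csatS_inl (φ : Fm Ag Const Var Atom) (n : ℕ) :
    (cQuasi p).SatS φ (Sum.inl n) ↔ (cQuasi p).SatP φ Sum.inl n := by
  constructor
  · rintro (⟨r', hr', n', hn', h⟩ | ⟨him, -⟩)
    · rcases hr' with rfl
      obtain rfl : n' = n := Sum.inl.injEq _ _ ▸ hn'
      exact h
    · exact absurd (by rw [cIm]; exact ⟨n, rfl⟩) him
  · intro h
    exact Or.inl ⟨Sum.inl, rfl, n, rfl, h⟩

lemma cnotIm (b : Bool) :
    (Sum.inr b : ℕ ⊕ Bool) ∉ (cQuasi (Ag := Ag) (Const := Const) (Var := Var) p).Im := by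
  rw [cIm]; rintro ⟨n, h⟩; exact nomatch h

lemma csatS_inrT (φ : Fm Ag Const Var Atom) :
    (cQuasi p).SatS φ (Sum.inr true) := Or.inr ⟨cnotIm p true, trivial⟩

lemma csatS_inrF (φ : Fm Ag Const Var Atom) :
    (cQuasi p).SatS φ (Sum.inr false) ↔ φ = Fm.atom p := by
  constructor
  · rintro (⟨r', hr', n', hn', -⟩ | ⟨-, h⟩)
    · rcases hr' with rfl; exact absurd hn' (fun h => nomatch h)
    · exact h
  · rintro rfl
    exact Or.inr ⟨cnotIm p false, rfl⟩

lemma ctset_core (φ : Fm Ag Const Var Atom) :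
    cCore ⊆ (cQuasi p).tset φ ↔ ∀ n, (cQuasi p).SatP φ Sum.inl n := by
  constructor
  · intro h n
    exact (csatS_inl p φ n).1 (h (by simp [cCore]))
  · rintro h w hw
    rcases w with n | b
    · exact (csatS_inl p φ n).2 (h n)
    · cases b
      · exact absurd rfl hw
      · exact csatS_inrT p φ

lemma cmemN_sub {i : Ag} {w : ℕ ⊕ Bool} {t : TmE Const Var} {A : Set (ℕ ⊕ Bool)}
    (h : A ∈ (cQuasi (Atom := Atom) p).N i w t) : cCore ⊆ A := by
  cases t with
  | var y =>
      simp only [cQuasi, Set.mem_singleton_iff] at h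
      subst h; exact Set.subset_univ _
  | const c => exact h
  | bang s => exact h
  | plus s u => exact h
  | times s u => exact h

lemma cmemN_const {i : Ag} {w : ℕ ⊕ Bool} {c : Const} {A : Set (ℕ ⊕ Bool)} :
    A ∈ (cQuasi (Atom := Atom) (Var := Var) p).N i w (TmE.const c) ↔ cCore ⊆ A := Iff.rfl

lemma cmemNO {i : Ag} {w : ℕ ⊕ Bool} {t : TmO Const Var} {A : Set (ℕ ⊕ Bool)} :
    A ∈ (cQuasi (Atom := Atom) p).NO i w t ↔ cCore ⊆ A := Iff.rfl

end JREModel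

end JTO
namespace JTO

section JRESound

open Classical

variable {Ag Const Var Atom : Type}

/-- Propositional tautologies hold at every point of every quasi-system. -/
lemma taut_sound {S : Type} (I : NQuasi Ag Const Var Atom S)
    {φ : Fm Ag Const Var Atom} (h : Taut φ) (r : ℕ → S) (n : ℕ) :
    I.SatP φ r n := by
  classical
  set v : Fm Ag Const Var Atom → Bool := fun ψ => if I.SatP ψ r n then true else false with hv
  have hb : v Fm.bot = false := by
    simp only [hv]
    rw [if_neg (by exact fun h => h)]
  have hi : ∀ a b, v (a.imp b) = (!(v a) || v b) := by
    intro a b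
    by_cases ha : I.SatP a r n <;> by_cases hb2 : I.SatP b r n <;>
      simp [hv, ha, hb2, NQuasi.satP_imp]
  have hφ := h v hb hi
  by_contra hc
  rw [hv] at hφ
  simp only [if_neg hc] at hφ
  exact Bool.noConfusion hφ

variable (p : Atom)

/-- Every axiom of JTO holds at every point of the run of the countermodel. -/
lemma cax_sound {φ : Fm Ag Const Var Atom} (h : IsAxiom φ) (n : ℕ) :
    (cQuasi p).SatP φ Sum.inl n := by
  cases h with
  | taut ht => exact taut_sound _ ht _ n
  | nextK φ ψ =>
      simp only [NQuasi.satP_imp, NQuasi.satP_next]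
      exact fun a b => a b
  | alwK φ ψ =>
      simp only [NQuasi.satP_imp, NQuasi.satP_alw]
      exact fun h1 h2 m hm => h1 m hm (h2 m hm)
  | fn φ =>
      rw [NQuasi.satP_biim]
      simp only [NQuasi.satP_neg, NQuasi.satP_next]
  | ind φ =>
      simp only [NQuasi.satP_imp, NQuasi.satP_alw, NQuasi.satP_next]
      intro h1 h2 m hm
      induction m, hm using Nat.le_induction with
      | base => exact h2
      | succ m hm ih => exact h1 m hm ih
  | untl1 φ ψ =>
      simp only [NQuasi.satP_imp, NQuasi.satP_untl, NQuasi.satP_ev]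
      rintro ⟨m, h1, h2, -⟩
      exact ⟨m, h1, h2⟩
  | untl2 φ ψ =>
      rw [NQuasi.satP_biim]
      simp only [NQuasi.satP_untl, NQuasi.satP_disj, NQuasi.satP_conj, NQuasi.satP_next,
        NQuasi.satP_untl]
      constructor
      · rintro ⟨m, h1, h2, h3⟩
        rcases Nat.eq_or_lt_of_le h1 with rfl | hlt
        · exact Or.inl h2
        · refine Or.inr ⟨h3 n le_rfl hlt, m, hlt, h2, fun k hk1 hk2 => h3 k (by omega) hk2⟩
      · rintro (h | ⟨hφ, m, h1, h2, h3⟩)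
        · exact ⟨n, le_rfl, h, fun k hk1 hk2 => absurd hk2 (by omega)⟩
        · refine ⟨m, by omega, h2, fun k hk1 hk2 => ?_⟩
          rcases Nat.eq_or_lt_of_le hk1 with rfl | hlt
          · exact hφ
          · exact h3 k (by omega) hk2
  | sofarK φ ψ =>
      simp only [NQuasi.satP_imp, NQuasi.satP_sofar]
      exact fun h1 h2 m hm => h1 m hm (h2 m hm)
  | wprevK φ ψ =>
      simp only [NQuasi.satP_imp, NQuasi.satP_wprev]
      tauto
  | sw φ =>
      simp only [NQuasi.satP_imp, NQuasi.satP_sprev, NQuasi.satP_wprev]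
      tauto
  | initial =>
      exact ⟨0, n.zero_le, Or.inl rfl, fun k _ _ => (cQuasi p).satP_top Sum.inl k⟩
  | sofarInd φ =>
      simp only [NQuasi.satP_imp, NQuasi.satP_sofar, NQuasi.satP_wprev]
      intro h1 h2 m hm
      have key : ∀ j, j ≤ n → (cQuasi p).SatP φ Sum.inl (n - j) := by
        intro j
        induction j with
        | zero => intro _; simpa using h2
        | succ j ih =>
            intro hj
            have hij := ih (by omega)
            rcases h1 (n - j) (by omega) hij with h0 | h0
            · omega
            · have : n - (j + 1) = n - j - 1 := by omega
              rw [this]; exact h0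
      have : m = n - (n - m) := by omega
      rw [this]; exact key (n - m) (by omega)
  | snce1 φ ψ =>
      simp only [NQuasi.satP_imp, NQuasi.satP_snce, NQuasi.satP_once]
      rintro ⟨m, h1, h2, -⟩
      exact ⟨m, h1, h2⟩
  | snce2 φ ψ =>
      rw [NQuasi.satP_biim]
      simp only [NQuasi.satP_snce, NQuasi.satP_disj, NQuasi.satP_conj, NQuasi.satP_sprev,
        NQuasi.satP_snce]
      constructor
      · rintro ⟨m, h1, h2, h3⟩
        rcases Nat.eq_or_lt_of_le h1 with rfl | hlt
        · exact Or.inl h2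
        · refine Or.inr ⟨h3 n hlt le_rfl, by omega,
            m, by omega, h2, fun k hk1 hk2 => h3 k hk1 (by omega)⟩
      · rintro (h | ⟨hφ, hn0, m, h1, h2, h3⟩)
        · exact ⟨n, le_rfl, h, fun k hk1 hk2 => absurd hk2 (by omega)⟩
        · refine ⟨m, by omega, h2, fun k hk1 hk2 => ?_⟩
          rcases Nat.eq_or_lt_of_le hk2 with rfl | hlt
          · exact hφ
          · exact h3 k hk1 (by omega)
  | fp φ =>
      simp only [NQuasi.satP_imp, NQuasi.satP_next, NQuasi.satP_sprev]
      intro h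
      exact ⟨n.succ_ne_zero, by simpa using h⟩
  | pf φ =>
      simp only [NQuasi.satP_imp, NQuasi.satP_wprev, NQuasi.satP_next]
      intro h
      cases n with
      | zero => exact Or.inl rfl
      | succ m => exact Or.inr (by simpa using h)
  | app i t s φ ψ =>
      simp only [NQuasi.satP_imp, NQuasi.satP_jbox]
      intro h1 h2
      have c1 := (ctset_core p _).1 (cmemN_sub p h1)
      have c2 := (ctset_core p _).1 (cmemN_sub p h2)
      exact (ctset_core p ψ).2 fun m => (c1 m) (c2 m)
  | sum1 i t s φ =>
      simp only [NQuasi.satP_imp, NQuasi.satP_jbox]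
      intro h1
      exact cmemN_sub p h1
  | sum2 i t s φ =>
      simp only [NQuasi.satP_imp, NQuasi.satP_jbox]
      intro h1
      exact cmemN_sub p h1
  | fact i t φ =>
      simp only [NQuasi.satP_imp, NQuasi.satP_jbox]
      intro h1
      exact (ctset_core p φ).1 (cmemN_sub p h1) n
  | pos i t φ =>
      simp only [NQuasi.satP_imp, NQuasi.satP_jbox]
      intro h1
      refine (ctset_core p _).2 fun m => ?_
      rw [NQuasi.satP_jbox]
      exact h1
  | appO i t s φ ψ =>
      simp only [NQuasi.satP_imp, NQuasi.satP_obox]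
      intro h1 h2
      have c1 := (ctset_core p _).1 ((cmemNO p).1 h1)
      have c2 := (ctset_core p _).1 ((cmemNO p).1 h2)
      exact (cmemNO p).2 ((ctset_core p ψ).2 fun m => (c1 m) (c2 m))
  | noc i t φ =>
      simp only [Fm.pbox, NQuasi.satP_imp, NQuasi.satP_neg, NQuasi.satP_obox]
      intro h1 h2
      have c1 := (ctset_core p _).1 ((cmemNO p).1 h1) 0
      have c2 := (ctset_core p _).1 ((cmemNO p).1 h2) 0
      rw [NQuasi.satP_neg] at c2
      exact c2 c1
  | ofact i t φ =>
      rw [NQuasi.satP_obox]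
      refine (cmemNO p).2 ((ctset_core p _).2 fun m => ?_)
      rw [NQuasi.satP_imp, NQuasi.satP_obox]
      intro h1
      exact (ctset_core p φ).1 ((cmemNO p).1 h1) m

lemma cEIter_sound {φ : Fm Ag Const Var Atom} (h : EIter φ) :
    ∀ n, (cQuasi p).SatP φ Sum.inl n := by
  induction h with
  | base hax =>
      intro n
      rw [NQuasi.satP_jbox]
      exact (cmemN_const p).2 ((ctset_core p _).2 (cax_sound p hax))
  | step _ ih =>
      intro n
      rw [NQuasi.satP_jbox]
      exact (cmemN_const p).2 ((ctset_core p _).2 ih)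

lemma cOIter_sound {φ : Fm Ag Const Var Atom} (h : OIter φ) :
    ∀ n, (cQuasi p).SatP φ Sum.inl n := by
  induction h with
  | base hax =>
      intro n
      rw [NQuasi.satP_obox]
      exact (cmemNO p).2 ((ctset_core p _).2 (cax_sound p hax))
  | step _ ih =>
      intro n
      rw [NQuasi.satP_obox]
      exact (cmemNO p).2 ((ctset_core p _).2 ih)

end JRESound

end JTO
namespace JTO

section JRENIS

open Classical

variable {Ag Const Var Atom : Type}

variable (p : Atom)

lemma cmemN_var {i : Ag} {w : ℕ ⊕ Bool} {y : Var} {A : Set (ℕ ⊕ Bool)} :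
    A ∈ (cQuasi (Atom := Atom) (Const := Const) p).N i w (TmE.var y) ↔ A = Set.univ :=
  Iff.rfl

lemma ctset_atom : (cQuasi (Ag := Ag) (Const := Const) (Var := Var) p).tset (Fm.atom p)
    = Set.univ := by
  ext w
  simp only [Set.mem_univ, iff_true]
  rcases w with n | b
  · exact (csatS_inl p _ n).2 trivial
  · cases b
    · exact (csatS_inrF p _).2 rfl
    · exact csatS_inrT p _

lemma cinl_mem_core (n : ℕ) : (Sum.inl n : ℕ ⊕ Bool) ∈ cCore :=
  fun h => nomatch h

/-- The countermodel as an interpreted-neighborhood system for JTO_CS. -/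
def cNIS (CS : ConstSpec Ag Const Var Atom) : NIS Ag Const Var Atom (ℕ ⊕ Bool) CS where
  toNQuasi := cQuasi p
  Sne := ⟨Sum.inr true⟩
  Rne := ⟨Sum.inl, rfl⟩
  Ncs := by
    rintro i t φ ⟨hset, hei⟩ w hw
    cases hei with
    | base hax => exact (cmemN_const p).2 ((ctset_core p _).2 (cax_sound p hax))
    | step he => exact (cmemN_const p).2 ((ctset_core p _).2 (cEIter_sound p he))
  Napp := by
    intro i w hw t s φ ψ h1 h2
    exact (ctset_core p ψ).2 fun m =>
      ((ctset_core p _).1 (cmemN_sub p h1) m) ((ctset_core p _).1 (cmemN_sub p h2) m)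
  Nsum := by
    intro i w hw t s φ h
    exact ⟨cmemN_sub p h, cmemN_sub p h⟩
  Nrefl := by
    intro i w hw t φ h
    rw [cIm] at hw
    obtain ⟨n, rfl⟩ := hw
    exact cmemN_sub p h (cinl_mem_core n)
  Npos := by
    intro i w hw t φ h
    refine (ctset_core p _).2 fun m => ?_
    rw [NQuasi.satP_jbox]
    exact h
  NOcs := by
    rintro i t φ ⟨hset, hoi⟩ w hw
    cases hoi with
    | base hax => exact (cmemNO p).2 ((ctset_core p _).2 (cax_sound p hax))
    | step ho => exact (cmemNO p).2 ((ctset_core p _).2 (cOIter_sound p ho))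
  NOapp := by
    intro i w hw t s φ ψ h1 h2
    exact (cmemNO p).2 ((ctset_core p ψ).2 fun m =>
      ((ctset_core p _).1 ((cmemNO p).1 h1) m) ((ctset_core p _).1 ((cmemNO p).1 h2) m))
  NOnoc := by
    intro i w hw t φ h hc
    have c1 := (ctset_core p _).1 ((cmemNO p).1 h) 0
    have c2 := (ctset_core p _).1 ((cmemNO p).1 hc) 0
    rw [NQuasi.satP_neg] at c2
    exact c2 c1
  NOfact := by
    intro i w hw t φ
    refine (cmemNO p).2 ((ctset_core p _).2 fun m => ?_)
    rw [NQuasi.satP_imp, NQuasi.satP_obox]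
    intro h1
    exact (ctset_core p φ).1 ((cmemNO p).1 h1) m

lemma cvalid_pp (CS : ConstSpec Ag Const Var Atom) :
    NValid CS (Fm.biim (Fm.atom p) (Fm.conj (Fm.atom p) (Fm.atom p))) := by
  intro S I r hr n
  show I.toNQuasi.SatP _ r n
  rw [NQuasi.satP_biim, NQuasi.satP_conj]
  tauto

lemma cnotvalid_pp (CS : ConstSpec Ag Const Var Atom) (i : Ag) (x : Var) :
    ¬ NValid CS (Fm.biim (Fm.jbox i (TmE.var x) (Fm.atom p))
        (Fm.jbox i (TmE.var x) (Fm.conj (Fm.atom p) (Fm.atom p)))) := by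
  intro h
  have hb : (cQuasi (Ag := Ag) (Const := Const) (Var := Var) p).SatP
      (Fm.biim (Fm.jbox i (TmE.var x) (Fm.atom p))
        (Fm.jbox i (TmE.var x) (Fm.conj (Fm.atom p) (Fm.atom p)))) Sum.inl 0 :=
    h (ℕ ⊕ Bool) (cNIS p CS) Sum.inl rfl 0
  rw [NQuasi.satP_biim, NQuasi.satP_jbox, NQuasi.satP_jbox] at hb
  have h1 : (cQuasi (Ag := Ag) (Const := Const) (Var := Var) p).tset (Fm.atom p)
      ∈ (cQuasi (Ag := Ag) (Const := Const) (Var := Var) p).N i (Sum.inl 0) (TmE.var x) :=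
    (cmemN_var p).2 (ctset_atom p)
  have h2 := hb.1 h1
  have h3 : (cQuasi (Ag := Ag) (Const := Const) (Var := Var) p).tset
      (Fm.conj (Fm.atom p) (Fm.atom p)) = Set.univ := (cmemN_var p).1 h2
  have h4 : (Sum.inr false : ℕ ⊕ Bool) ∈
      (cQuasi (Ag := Ag) (Const := Const) (Var := Var) p).tset
        (Fm.conj (Fm.atom p) (Fm.atom p)) := by rw [h3]; trivial
  have h5 := (csatS_inrF p _).1 h4
  simp [Fm.conj, Fm.disj, Fm.neg] at h5

end JRENIS

end JTO
namespace JTO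

/-- the epistemic regularity rule (JRE) is not validity preserving
in JTO_CS over interpreted-neighborhood systems. -/
theorem jre_not_validity_preserving (Ag Const Var Atom : Type)
    [Fintype Ag] [Nonempty Ag] [Countable Const] [Countable Var] [Countable Atom]
    (CS : ConstSpec Ag Const Var Atom) (i : Ag) (x : Var) (p : Atom) :
    (∃ (φ ψ : Fm Ag Const Var Atom) (t : TmE Const Var) (j : Ag),
      NValid CS (Fm.biim φ ψ) ∧
      ¬ NValid CS (Fm.biim (Fm.jbox j t φ) (Fm.jbox j t ψ))) ∧
    (NValid CS (Fm.biim (Fm.atom p) (Fm.conj (Fm.atom p) (Fm.atom p))) ∧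
      ¬ NValid CS (Fm.biim (Fm.jbox i (TmE.var x) (Fm.atom p))
        (Fm.jbox i (TmE.var x) (Fm.conj (Fm.atom p) (Fm.atom p))))) := by
  exact ⟨⟨Fm.atom p, Fm.conj (Fm.atom p) (Fm.atom p), TmE.var x, i,
    cvalid_pp p CS, cnotvalid_pp p CS i x⟩, cvalid_pp p CS, cnotvalid_pp p CS i x⟩

end JTO
end

section
/- The deontic regularity rule (JRE_O) — from φ ↔ ψ infer O[t]_i φ ↔ O[t]_i ψ — is not validity preserving in JTO_CS over interpreted-neighborhood systems: for every constant specification CS there exist formulas φ, ψ, a deontic term t ∈ Tm^O and an agent i such that ⊨^N_CS φ ↔ ψ but not ⊨^N_CS O[t]_i φ ↔ O[t]_i ψ. In particular, for a justification variable x and an atomic proposition p, ⊨^N_CS p ↔ p∧p but not ⊨^N_CS O[x]_i p ↔ O[x]_i (p∧p). -/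
namespace JTO

section Aux

open Classical

variable {Ag Const Var Atom S : Type}

section SatLemmas
variable {I : NQuasi Ag Const Var Atom S} {r : ℕ → S} {n : ℕ} {φ ψ : Fm Ag Const Var Atom}

lemma satP_imp : I.SatP (φ.imp ψ) r n ↔ (I.SatP φ r n → I.SatP ψ r n) := Iff.rfl
lemma satP_bot : ¬ I.SatP Fm.bot r n := fun h => h
lemma satP_neg : I.SatP (Fm.neg φ) r n ↔ ¬ I.SatP φ r n := Iff.rfl
lemma satP_top : I.SatP (Fm.top) r n := fun h => h
lemma satP_next : I.SatP (Fm.next φ) r n ↔ I.SatP φ r (n+1) := Iff.rfl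
lemma satP_wprev : I.SatP (Fm.wprev φ) r n ↔ (n = 0 ∨ I.SatP φ r (n-1)) := Iff.rfl
lemma satP_untl : I.SatP (Fm.untl φ ψ) r n ↔
    ∃ m, n ≤ m ∧ I.SatP ψ r m ∧ ∀ k, n ≤ k → k < m → I.SatP φ r k := Iff.rfl
lemma satP_snce : I.SatP (Fm.snce φ ψ) r n ↔
    ∃ m, m ≤ n ∧ I.SatP ψ r m ∧ ∀ k, m < k → k ≤ n → I.SatP φ r k := Iff.rfl

lemma satP_disj : I.SatP (Fm.disj φ ψ) r n ↔ (I.SatP φ r n ∨ I.SatP ψ r n) := by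
  have h : I.SatP (Fm.disj φ ψ) r n ↔ (¬ I.SatP φ r n → I.SatP ψ r n) := Iff.rfl
  rw [h]; tauto

lemma satP_conj : I.SatP (Fm.conj φ ψ) r n ↔ (I.SatP φ r n ∧ I.SatP ψ r n) := by
  have h : I.SatP (Fm.conj φ ψ) r n ↔ ¬ (¬¬ I.SatP φ r n → ¬ I.SatP ψ r n) := Iff.rfl
  rw [h]; tauto

lemma satP_biim : I.SatP (Fm.biim φ ψ) r n ↔ (I.SatP φ r n ↔ I.SatP ψ r n) := by
  have h : I.SatP (Fm.biim φ ψ) r n ↔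
      (I.SatP (φ.imp ψ) r n ∧ I.SatP (ψ.imp φ) r n) := satP_conj
  rw [h, satP_imp, satP_imp]; tauto

lemma satP_sprev : I.SatP (Fm.sprev φ) r n ↔ (n ≠ 0 ∧ I.SatP φ r (n-1)) := by
  have h : I.SatP (Fm.sprev φ) r n ↔ ¬ (n = 0 ∨ ¬ I.SatP φ r (n-1)) := Iff.rfl
  rw [h]; push_neg; tauto

lemma satP_ev : I.SatP (Fm.ev φ) r n ↔ ∃ m, n ≤ m ∧ I.SatP φ r m := by
  constructor
  · rintro ⟨m, a, b, -⟩; exact ⟨m, a, b⟩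
  · rintro ⟨m, a, b⟩; exact ⟨m, a, b, fun _ _ _ => satP_top⟩

lemma satP_alw : I.SatP (Fm.alw φ) r n ↔ ∀ m, n ≤ m → I.SatP φ r m := by
  have h : I.SatP (Fm.alw φ) r n ↔ ¬ I.SatP (Fm.ev (Fm.neg φ)) r n := Iff.rfl
  rw [h, satP_ev]; push_neg
  refine forall_congr' fun m => imp_congr Iff.rfl ?_
  rw [satP_neg]; tauto

lemma satP_once : I.SatP (Fm.once φ) r n ↔ ∃ m, m ≤ n ∧ I.SatP φ r m := by
  constructor
  · rintro ⟨m, a, b, -⟩; exact ⟨m, a, b⟩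
  · rintro ⟨m, a, b⟩; exact ⟨m, a, b, fun _ _ _ => satP_top⟩

lemma satP_sofar : I.SatP (Fm.sofar φ) r n ↔ ∀ m, m ≤ n → I.SatP φ r m := by
  have h : I.SatP (Fm.sofar φ) r n ↔ ¬ I.SatP (Fm.once (Fm.neg φ)) r n := Iff.rfl
  rw [h, satP_once]; push_neg
  refine forall_congr' fun m => imp_congr Iff.rfl ?_
  rw [satP_neg]; tauto

end SatLemmas

/-- The state space of the countermodel: run states ℕ plus one extra state. -/
abbrev MS : Type := ℕ ⊕ Unit

/-- Deontic neighborhoods of the countermodel. -/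
def NOfun (t : TmO Const Var) : Set (Set MS) :=
  match t with
  | .var _ => {A | Sum.inr () ∈ A}
  | _ => {A | ∀ m, Sum.inl m ∈ A}

lemma NOfun_var {y : Var} :
    NOfun (TmO.var y : TmO Const Var) = {A : Set MS | Sum.inr () ∈ A} := rfl
lemma NOfun_const {c : Const} :
    NOfun (TmO.const c : TmO Const Var) = {A : Set MS | ∀ m, Sum.inl m ∈ A} := rfl
lemma NOfun_ddag {t : TmO Const Var} :
    NOfun (TmO.ddag t) = {A : Set MS | ∀ m, Sum.inl m ∈ A} := rfl
lemma NOfun_times {t s : TmO Const Var} :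
    NOfun (TmO.times t s) = {A : Set MS | ∀ m, Sum.inl m ∈ A} := rfl

/-- The quasi-system of the countermodel. -/
def MQ (Ag Const Var Atom : Type) (p : Atom) : NQuasi Ag Const Var Atom MS where
  R := {fun m => Sum.inl m}
  N := fun _ _ _ => {A | ∀ m, Sum.inl m ∈ A}
  NO := fun _ _ t => NOfun t
  val := fun _ => {p}
  valF := fun _ => {Fm.atom p}

variable {p : Atom}

lemma run_mem : (Sum.inl : ℕ → MS) ∈ (MQ Ag Const Var Atom p).R := rfl

lemma inr_not_im : (Sum.inr () : MS) ∉ (MQ Ag Const Var Atom p).Im := by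
  rintro ⟨r', hr', m, hm⟩
  obtain rfl : r' = fun k => Sum.inl k := hr'
  exact Sum.inl_ne_inr hm

lemma satS_inl {φ : Fm Ag Const Var Atom} {n : ℕ} :
    (MQ Ag Const Var Atom p).SatS φ (Sum.inl n) ↔
      (MQ Ag Const Var Atom p).SatP φ Sum.inl n := by
  constructor
  · rintro (⟨r', hr', m, hm, hs⟩ | ⟨him, -⟩)
    · obtain rfl : r' = fun k => Sum.inl k := hr'
      injection hm with hmn
      subst hmn
      exact hs
    · exact absurd ⟨Sum.inl, rfl, n, rfl⟩ him
  · intro h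
    exact Or.inl ⟨Sum.inl, rfl, n, rfl, h⟩

lemma satS_inr {φ : Fm Ag Const Var Atom} :
    (MQ Ag Const Var Atom p).SatS φ (Sum.inr ()) ↔ φ = Fm.atom p := by
  constructor
  · rintro (⟨r', hr', m, hm, -⟩ | ⟨-, hv⟩)
    · obtain rfl : r' = fun k => Sum.inl k := hr'
      exact absurd hm Sum.inl_ne_inr
    · exact hv
  · rintro rfl
    exact Or.inr ⟨inr_not_im, rfl⟩

lemma satP_jbox {i : Ag} {t : TmE Const Var} {φ : Fm Ag Const Var Atom}
    {r' : ℕ → MS} {n' : ℕ} :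
    (MQ Ag Const Var Atom p).SatP (Fm.jbox i t φ) r' n' ↔
      ∀ m, (MQ Ag Const Var Atom p).SatP φ Sum.inl m := by
  constructor
  · intro h m; exact satS_inl.mp (h m)
  · intro h m; exact satS_inl.mpr (h m)

lemma satP_obox {i : Ag} {t : TmO Const Var} {φ : Fm Ag Const Var Atom}
    {r' : ℕ → MS} {n' : ℕ} :
    (MQ Ag Const Var Atom p).SatP (Fm.obox i t φ) r' n' ↔
      (MQ Ag Const Var Atom p).tset φ ∈ NOfun t := Iff.rfl

lemma mem_NO_elim {t : TmO Const Var} {φ : Fm Ag Const Var Atom}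
    (h : (MQ Ag Const Var Atom p).tset φ ∈ NOfun t) :
    ∀ m, (MQ Ag Const Var Atom p).SatP φ Sum.inl m := by
  cases t with
  | var y =>
      have hφ : φ = Fm.atom p := satS_inr.mp h
      subst hφ
      intro m
      exact rfl
  | const c => intro m; exact satS_inl.mp (h m)
  | ddag t => intro m; exact satS_inl.mp (h m)
  | times t s => intro m; exact satS_inl.mp (h m)

lemma ax_sound {φ : Fm Ag Const Var Atom} (h : IsAxiom φ) :
    ∀ n, (MQ Ag Const Var Atom p).SatP φ Sum.inl n := by
  cases h with
  | taut ht =>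
      intro n
      classical
      have key := ht (fun ψ => if (MQ Ag Const Var Atom p).SatP ψ Sum.inl n then true else false)
        (if_neg satP_bot)
        (by
          intro a b
          by_cases ha : (MQ Ag Const Var Atom p).SatP a Sum.inl n <;>
            by_cases hb : (MQ Ag Const Var Atom p).SatP b Sum.inl n <;>
            simp [satP_imp, ha, hb])
      by_cases hφ : (MQ Ag Const Var Atom p).SatP φ Sum.inl n
      · exact hφ
      · have key' : (if (MQ Ag Const Var Atom p).SatP φ Sum.inl n then true else false)
            = true := key
        rw [if_neg hφ] at key'
        cases key'
  | nextK φ ψ => intro n h1 h2; exact h1 h2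
  | alwK φ ψ =>
      intro n
      rw [satP_imp, satP_imp, satP_alw, satP_alw, satP_alw]
      intro h1 h2 m hm
      exact h1 m hm (h2 m hm)
  | fn φ =>
      intro n
      rw [satP_biim]
      exact Iff.rfl
  | ind φ =>
      intro n
      rw [satP_imp, satP_imp, satP_alw, satP_alw]
      intro h1 h2 m hm
      induction m, hm using Nat.le_induction with
      | base => exact h2
      | succ m hm ih => exact h1 m hm ih
  | untl1 φ ψ =>
      intro n
      rintro ⟨m, a, b, -⟩
      exact satP_ev.mpr ⟨m, a, b⟩
  | untl2 φ ψ =>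
      intro n
      rw [satP_biim, satP_disj, satP_conj, satP_next]
      constructor
      · rintro ⟨m, hm, hψ, hside⟩
        rcases Nat.eq_or_lt_of_le hm with rfl | hlt
        · exact Or.inl hψ
        · exact Or.inr ⟨hside n le_rfl hlt,
            satP_untl.mpr ⟨m, by omega, hψ, fun k h1 h2 => hside k (by omega) h2⟩⟩
      · rintro (h | ⟨hφ, h⟩)
        · exact ⟨n, le_rfl, h, fun k h1 h2 => absurd h1 (by omega)⟩
        · obtain ⟨m, hm, hψ, hside⟩ := satP_untl.mp h
          refine ⟨m, by omega, hψ, fun k h1 h2 => ?_⟩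
          rcases Nat.eq_or_lt_of_le h1 with rfl | hlt
          · exact hφ
          · exact hside k (by omega) h2
  | sofarK φ ψ =>
      intro n
      rw [satP_imp, satP_imp, satP_sofar, satP_sofar, satP_sofar]
      intro h1 h2 m hm
      exact h1 m hm (h2 m hm)
  | wprevK φ ψ =>
      intro n
      rw [satP_imp, satP_imp, satP_wprev, satP_wprev, satP_wprev]
      intro h1 h2
      rcases h1 with h | h1
      · exact Or.inl h
      rcases h2 with h | h2
      · exact Or.inl h
      exact Or.inr (h1 h2)
  | sw φ =>
      intro n
      rw [satP_imp, satP_sprev, satP_wprev]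
      rintro ⟨-, h⟩
      exact Or.inr h
  | initial =>
      intro n
      exact satP_once.mpr ⟨0, Nat.zero_le n, Or.inl rfl⟩
  | sofarInd φ =>
      intro n
      rw [satP_imp, satP_imp, satP_sofar, satP_sofar]
      intro h1 h2 m hm
      have key : ∀ d, (MQ Ag Const Var Atom p).SatP φ Sum.inl (n - d) := by
        intro d
        induction d with
        | zero => simpa using h2
        | succ d ih =>
            rcases h1 (n - d) (Nat.sub_le n d) ih with h0 | h
            · rw [show n - (d+1) = n - d by omega]; exact ih
            · rw [show n - (d+1) = n - d - 1 by omega]; exact h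
      have hk := key (n - m)
      rwa [show n - (n - m) = m by omega] at hk
  | snce1 φ ψ =>
      intro n
      rintro ⟨m, a, b, -⟩
      exact satP_once.mpr ⟨m, a, b⟩
  | snce2 φ ψ =>
      intro n
      rw [satP_biim, satP_disj, satP_conj, satP_sprev]
      constructor
      · rintro ⟨m, hm, hψ, hside⟩
        rcases Nat.eq_or_lt_of_le hm with rfl | hlt
        · exact Or.inl hψ
        · refine Or.inr ⟨hside n hlt le_rfl, by omega, ?_⟩
          exact satP_snce.mpr ⟨m, by omega, hψ, fun k h1 h2 => hside k h1 (by omega)⟩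
      · rintro (h | ⟨hφ, hne, h⟩)
        · exact ⟨n, le_rfl, h, fun k h1 h2 => absurd h1 (by omega)⟩
        · obtain ⟨m, hm, hψ, hside⟩ := satP_snce.mp h
          refine ⟨m, by omega, hψ, fun k h1 h2 => ?_⟩
          rcases Nat.eq_or_lt_of_le h2 with rfl | hlt
          · exact hφ
          · exact hside k h1 (by omega)
  | fp φ =>
      intro n
      rw [satP_imp, satP_next, satP_sprev]
      intro h
      exact ⟨Nat.succ_ne_zero n, by simpa using h⟩
  | pf φ =>
      intro n
      rw [satP_imp, satP_wprev, satP_next]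
      intro h
      cases n with
      | zero => exact Or.inl rfl
      | succ k => exact Or.inr h
  | app i t s φ ψ =>
      intro n
      rw [satP_imp, satP_imp, satP_jbox, satP_jbox, satP_jbox]
      intro h1 h2 m
      exact (h1 m) (h2 m)
  | sum1 i t s φ =>
      intro n
      rw [satP_imp, satP_jbox, satP_jbox]
      exact id
  | sum2 i t s φ =>
      intro n
      rw [satP_imp, satP_jbox, satP_jbox]
      exact id
  | fact i t φ =>
      intro n
      rw [satP_imp, satP_jbox]
      intro h
      exact h n
  | pos i t φ =>
      intro n
      rw [satP_imp, satP_jbox, satP_jbox]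
      intro h m
      exact satP_jbox.mpr h
  | appO i t s φ ψ =>
      intro n
      rw [satP_imp, satP_imp, satP_obox, satP_obox, satP_obox, NOfun_times]
      intro h1 h2 m
      exact satS_inl.mpr ((mem_NO_elim h1 m) (mem_NO_elim h2 m))
  | noc i t φ =>
      intro n
      rw [satP_imp, satP_obox]
      intro h h2
      exact (mem_NO_elim (satP_obox.mp h2) 0) (mem_NO_elim h 0)
  | ofact i t φ =>
      intro n
      rw [satP_obox, NOfun_ddag]
      intro m
      exact satS_inl.mpr (fun hob => mem_NO_elim (satP_obox.mp hob) m)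

lemma eiter_sound {φ : Fm Ag Const Var Atom} (h : EIter φ) :
    ∀ n, (MQ Ag Const Var Atom p).SatP φ Sum.inl n := by
  induction h with
  | base ha => intro n; exact satP_jbox.mpr (ax_sound ha)
  | step _ ih => intro n; exact satP_jbox.mpr ih

lemma oiter_sound {φ : Fm Ag Const Var Atom} (h : OIter φ) :
    ∀ n, (MQ Ag Const Var Atom p).SatP φ Sum.inl n := by
  induction h with
  | base ha =>
      intro n
      refine satP_obox.mpr ?_
      rw [NOfun_const]
      exact fun m => satS_inl.mpr (ax_sound ha m)
  | step _ ih =>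
      intro n
      refine satP_obox.mpr ?_
      rw [NOfun_const]
      exact fun m => satS_inl.mpr (ih m)

/-- The countermodel, as an interpreted-neighborhood system for any CS. -/
def MI (CS : ConstSpec Ag Const Var Atom) (p : Atom) : NIS Ag Const Var Atom MS CS where
  toNQuasi := MQ Ag Const Var Atom p
  Sne := ⟨Sum.inr ()⟩
  Rne := ⟨Sum.inl, run_mem⟩
  Ncs := by
    intro i t φ hφ w hw m
    exact satS_inl.mpr (satP_jbox.mp (eiter_sound hφ.2 0) m)
  Napp := by
    intro i w hw t s φ ψ h1 h2 m
    exact satS_inl.mpr ((satS_inl.mp (h1 m)) (satS_inl.mp (h2 m)))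
  Nsum := fun i w hw t s φ h => ⟨h, h⟩
  Nrefl := by
    rintro i w ⟨r', hr', m, rfl⟩ t φ h
    obtain rfl : r' = fun k => Sum.inl k := hr'
    exact h m
  Npos := by
    intro i w hw t φ h m
    exact satS_inl.mpr (satP_jbox.mpr (fun k => satS_inl.mp (h k)))
  NOcs := by
    intro i t φ hφ w hw
    cases hφ.2 with
    | base ha => exact fun m => satS_inl.mpr (ax_sound ha m)
    | step h' => exact fun m => satS_inl.mpr (oiter_sound h' m)
  NOapp := by
    intro i w hw t s φ ψ h1 h2 m
    exact satS_inl.mpr ((mem_NO_elim h1 m) (mem_NO_elim h2 m))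
  NOnoc := by
    intro i w hw t φ h h2
    exact (mem_NO_elim h2 0) (mem_NO_elim h 0)
  NOfact := by
    intro i w hw t φ m
    exact satS_inl.mpr (fun hob => mem_NO_elim (satP_obox.mp hob) m)

end Aux

/-- the deontic regularity rule (JRE_O) is not validity preserving
in JTO_CS over interpreted-neighborhood systems. -/
theorem jreO_not_validity_preserving (Ag Const Var Atom : Type)
    [Fintype Ag] [Nonempty Ag] [Countable Const] [Countable Var] [Countable Atom]
    (CS : ConstSpec Ag Const Var Atom) (i : Ag) (x : Var) (p : Atom) :
    (∃ (φ ψ : Fm Ag Const Var Atom) (t : TmO Const Var) (j : Ag),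
      NValid CS (Fm.biim φ ψ) ∧
      ¬ NValid CS (Fm.biim (Fm.obox j t φ) (Fm.obox j t ψ))) ∧
    (NValid CS (Fm.biim (Fm.atom p) (Fm.conj (Fm.atom p) (Fm.atom p))) ∧
      ¬ NValid CS (Fm.biim (Fm.obox i (TmO.var x) (Fm.atom p))
        (Fm.obox i (TmO.var x) (Fm.conj (Fm.atom p) (Fm.atom p))))) := by
  classical
  have part1 : NValid CS (Fm.biim (Fm.atom p) (Fm.conj (Fm.atom p) (Fm.atom p))) := by
    intro S I r hr n
    have hh : I.toNQuasi.SatP (Fm.biim (Fm.atom p) (Fm.conj (Fm.atom p) (Fm.atom p))) r n := by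
      rw [satP_biim, satP_conj]
      tauto
    exact hh
  have part2 : ¬ NValid CS (Fm.biim (Fm.obox i (TmO.var x) (Fm.atom p))
      (Fm.obox i (TmO.var x) (Fm.conj (Fm.atom p) (Fm.atom p)))) := by
    intro h
    have hv : (MQ Ag Const Var Atom p).SatP (Fm.biim (Fm.obox i (TmO.var x) (Fm.atom p))
        (Fm.obox i (TmO.var x) (Fm.conj (Fm.atom p) (Fm.atom p)))) Sum.inl 0 :=
      h MS (MI CS p) Sum.inl run_mem 0
    rw [satP_biim] at hv
    have hL : (MQ Ag Const Var Atom p).SatP (Fm.obox i (TmO.var x) (Fm.atom p)) Sum.inl 0 := by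
      refine satP_obox.mpr ?_
      rw [NOfun_var]
      exact satS_inr.mpr rfl
    have hR := hv.mp hL
    have hEq : Fm.conj (Fm.atom p) (Fm.atom p) = Fm.atom p :=
      satS_inr.mp (satP_obox.mp hR)
    simp [Fm.conj, Fm.disj, Fm.neg] at hEq
  exact ⟨⟨_, _, _, i, part1, part2⟩, part1, part2⟩

end JTO
end
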